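/- Assume the covering setup: n, p ≥ 1; real r with 2 ≤ r < ∞ and q = r/(r−1); constants X_b, B_b > 0; X ∈ ℝ^{n×p} with rows x_i satisfying ‖x_i‖_r ≤ X_b and nonzero columns h_1, ..., h_p; scaled columns h̃_j := (n^{1/r} X_b B_b / ‖h_j‖_r) h_j; constraint data c_{jν} ∈ ℝ and δ_ν > 0 (ν = 1..V) with scaled coefficients c̃_{jν} := c_{jν} n^{1/r} X_b B_b / ‖h_j‖_r and Σ_j |c̃_{jν}| > 0 for each ν; coefficient set B := {β ∈ ℝ^p : ‖β‖_q ≤ B_b and Σ_j c_{jν} β_j + δ_ν ≤ 1 for all ν}; X̃ := [h̃_1 ⋯ h̃_p]; and λ := smallest eigenvalue of X̃ᵀX̃, assumed positive. Let 0 < ε < X_b B_b and set K := max{⌈X_b² B_b² / ε²⌉, ⌈n X_b² B_b² /(λ · [min_{ν} δ_ν/(Σ_j |c̃_{jν}|)]²)⌉}. Then for every β ∈ B there exist integers k_1, ..., k_p ∈ ℤ with Σ_j |k_j| ≤ K and Σ_j c̃_{jν} k_j ≤ K for all ν = 1..V, such that ‖Xβ − Σ_{j=1}^p (k_j/K) h̃_j‖₂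 ≤ √n · ε. -/

import Mathlib

/-- The `ℓ_r` norm of a finite real vector, `(∑ i |v i|^r)^(1/r)`. -/
noncomputable def lpNorm {ι : Type*} [Fintype ι] (r : ℝ) (v : ι → ℝ) : ℝ :=
  (∑ i, |v i| ^ r) ^ (1 / r)

open Finset

lemma exists_le_avg {ι : Type*} [Fintype ι] [Nonempty ι] (w x : ι → ℝ) (b : ℝ)
    (hw0 : ∀ i, 0 ≤ w i) (hw1 : ∑ i, w i = 1) (havg : ∑ i, w i * x i ≤ b) :
    ∃ i, x i ≤ b := by
  obtain ⟨i0, -, hi0⟩ := Finset.exists_min_image Finset.univ x ⟨Classical.arbitrary ι, mem_univ _⟩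
  refine ⟨i0, ?_⟩
  calc x i0 = ∑ i, w i * x i0 := by rw [← Finset.sum_mul, hw1, one_mul]
    _ ≤ ∑ i, w i * x i := by
        refine Finset.sum_le_sum fun i _ => mul_le_mul_of_nonneg_left (hi0 i (mem_univ i)) (hw0 i)
    _ ≤ b := havg

lemma maurey {E : Type*} [NormedAddCommGroup E] [InnerProductSpace ℝ E]
    {ι : Type*} [Fintype ι] [DecidableEq ι] (a : ι → E) (w : ι → ℝ) (M : ℝ)
    (hw0 : ∀ i, 0 ≤ w i) (hw1 : ∑ i, w i ≤ 1) (hM : ∀ i, ‖a i‖ ^ 2 ≤ M) (hM0 : 0 ≤ M) :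
    ∀ t : ℕ, ∃ m : ι → ℕ, (∑ i, m i) ≤ t ∧
      ‖(∑ i, (m i : ℝ) • a i) - (t : ℝ) • (∑ i, w i • a i)‖ ^ 2 ≤ t * M := by
  set f : E := ∑ i, w i • a i with hf
  intro t
  induction t with
  | zero => exact ⟨0, by simp, by simp⟩
  | succ t ih =>
    obtain ⟨m, hm, hb⟩ := ih
    set E0 : E := (∑ i, (m i : ℝ) • a i) - (t : ℝ) • f with hE0
    -- atoms indexed by Option ι
    set A : Option ι → E := fun o => o.elim 0 a with hA
    set W : Option ι → ℝ := fun o => o.elim (1 - ∑ i, w i) w with hW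
    have hW0 : ∀ o, 0 ≤ W o := by
      rintro (_ | i)
      · simpa [hW] using hw1
      · exact hw0 i
    have hW1 : ∑ o, W o = 1 := by
      rw [Fintype.sum_option]; simp [hW]
    have hWA : ∑ o, W o • A o = f := by
      rw [Fintype.sum_option]; simp [hW, hA, hf]
    -- the averaged bound
    have key : ∑ o, W o * ‖E0 + (A o - f)‖ ^ 2 ≤ ‖E0‖ ^ 2 + M := by
      have expand : ∀ o, ‖E0 + (A o - f)‖ ^ 2
          = ‖E0 - f‖ ^ 2 + 2 * inner ℝ (E0 - f) (A o) + ‖A o‖ ^ 2 := by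
        intro o
        have : E0 + (A o - f) = (E0 - f) + A o := by abel
        rw [this, @norm_add_sq_real]
      have hsum : ∑ o, W o * ‖E0 + (A o - f)‖ ^ 2
          = ‖E0 - f‖ ^ 2 + 2 * inner ℝ (E0 - f) f + ∑ o, W o * ‖A o‖ ^ 2 := by
        simp_rw [expand, mul_add, Finset.sum_add_distrib, ← Finset.sum_mul, hW1, one_mul]
        congr 1
        congr 1
        have : (inner ℝ (E0 - f) f : ℝ) = ∑ o, W o * inner ℝ (E0 - f) (A o) := by
          rw [← hWA, inner_sum]
          simp_rw [real_inner_smul_right]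
        rw [this, Finset.mul_sum]
        refine Finset.sum_congr rfl fun o _ => by ring
      rw [hsum]
      have h1 : ‖E0 - f‖ ^ 2 + 2 * inner ℝ (E0 - f) f ≤ ‖E0‖ ^ 2 := by
        have : ‖E0‖ ^ 2 = ‖(E0 - f) + f‖ ^ 2 := by norm_num
        rw [this, @norm_add_sq_real]
        nlinarith [sq_nonneg ‖f‖]
      have h2 : ∑ o, W o * ‖A o‖ ^ 2 ≤ M := by
        calc ∑ o, W o * ‖A o‖ ^ 2 ≤ ∑ o, W o * M := by
              refine Finset.sum_le_sum fun o _ => mul_le_mul_of_nonneg_left ?_ (hW0 o)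
              rcases o with _ | i
              · simpa [hA] using hM0
              · exact hM i
          _ = M := by rw [← Finset.sum_mul, hW1, one_mul]
      linarith
    obtain ⟨o0, ho0⟩ := exists_le_avg W (fun o => ‖E0 + (A o - f)‖ ^ 2) (‖E0‖ ^ 2 + M)
      hW0 hW1 key
    rcases o0 with _ | j
    · refine ⟨m, le_trans hm (Nat.le_succ t), ?_⟩
      have heq : (∑ i, (m i : ℝ) • a i) - ((t + 1 : ℕ) : ℝ) • f = E0 + (A none - f) := by
        simp only [hA, Option.elim]
        push_cast
        rw [hE0, add_smul, one_smul]
        abel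
      rw [heq]
      calc ‖E0 + (A none - f)‖ ^ 2 ≤ ‖E0‖ ^ 2 + M := ho0
        _ ≤ t * M + M := by linarith
        _ = (t + 1 : ℕ) * M := by push_cast; ring
    · refine ⟨Function.update m j (m j + 1), ?_, ?_⟩
      · have h1 : ∑ i, Function.update m j (m j + 1) i
            = ∑ i ∈ univ \ {j}, m i + (m j + 1) := by
          rw [Finset.sum_eq_sum_sdiff_singleton_add (mem_univ j)]
          congr 1
          · refine Finset.sum_congr rfl fun x hx => ?_
            have hxj : x ≠ j := fun h => (Finset.mem_sdiff.1 hx).2 (Finset.mem_singleton.2 h)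
            rw [Function.update_of_ne hxj]
          · simp
        have h2 : ∑ i, m i = ∑ i ∈ univ \ {j}, m i + m j :=
          Finset.sum_eq_sum_sdiff_singleton_add (mem_univ j) m
        omega
      · have heq : (∑ i, ((Function.update m j (m j + 1) i : ℝ)) • a i)
            - ((t + 1 : ℕ) : ℝ) • f = E0 + (A (some j) - f) := by
          have : ∑ i, ((Function.update m j (m j + 1) i : ℝ)) • a i
              = (∑ i, (m i : ℝ) • a i) + a j := by
            rw [Finset.sum_eq_sum_sdiff_singleton_add (mem_univ j)
                (fun i => ((Function.update m j (m j + 1) i : ℕ) : ℝ) • a i),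
              Finset.sum_eq_sum_sdiff_singleton_add (mem_univ j) (fun i => (m i : ℝ) • a i)]
            have : ∀ x ∈ univ \ {j}, ((Function.update m j (m j + 1) x : ℕ) : ℝ) • a x
                = (m x : ℝ) • a x := by
              intro x hx
              have hxj : x ≠ j := fun h => (Finset.mem_sdiff.1 hx).2 (Finset.mem_singleton.2 h)
              rw [Function.update_of_ne hxj]
            rw [Finset.sum_congr rfl this, Function.update_self]
            push_cast
            rw [add_smul, one_smul]
            abel
          rw [this]
          simp only [hA, Option.elim]
          push_cast
          rw [hE0, add_smul, one_smul]
          abel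
        rw [heq]
        calc ‖E0 + (A (some j) - f)‖ ^ 2 ≤ ‖E0‖ ^ 2 + M := ho0
          _ ≤ t * M + M := by linarith
          _ = (t + 1 : ℕ) * M := by push_cast; ring

lemma euc_sum_apply {n : ℕ} {ι : Type*} (s : Finset ι) (f : ι → EuclideanSpace ℝ (Fin n))
    (i : Fin n) : (∑ j ∈ s, f j) i = ∑ j ∈ s, f j i := by
  classical
  induction s using Finset.induction with
  | empty => rfl
  | insert _ _ hx ih => rw [Finset.sum_insert hx, Finset.sum_insert hx, ← ih]; rfl

lemma euc_norm_sq {n : ℕ} (v : EuclideanSpace ℝ (Fin n)) : ‖v‖ ^ 2 = ∑ i, (v i) ^ 2 := by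
  rw [EuclideanSpace.norm_eq, Real.sq_sqrt (Finset.sum_nonneg fun i _ => sq_nonneg _)]
  simp [Real.norm_eq_abs, sq_abs]

/-- The core covering construction in the proof of the paper's Theorem 3: in the covering
setup (rows of the data matrix in the `ℓ_r` ball of radius `X_b`, nonzero columns `h j`,
scaled columns `h̃ j`, scaled constraint coefficients `c̃ ν j`, `λ > 0` a quadratic-form
lower bound for `X̃ᵀX̃`), for `0 < ε < X_b B_b` and
`K = max{⌈X_b²B_b²/ε²⌉, ⌈n X_b²B_b²/(λ [min_ν δ ν/∑_j |c̃ ν j|]²)⌉}`, every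
`β` with `‖β‖_q ≤ B_b` and `∑ j c ν j β j + δ ν ≤ 1` for all `ν` admits integers
`k 1, ..., k p` with `∑ j |k j| ≤ K` and `∑ j c̃ ν j k j ≤ K` for all `ν`, such that
`‖Xβ - ∑ j (k j / K) h̃ j‖₂ ≤ √n ε`. -/
theorem covering_construction
    (n p V : ℕ) (hn : 1 ≤ n) (hp : 1 ≤ p) (hV : 0 < V)
    (r : ℝ) (hr : 2 ≤ r) (q : ℝ) (hq : q = r / (r - 1))
    (Xb Bb : ℝ) (hXb : 0 < Xb) (hBb : 0 < Bb)
    (X : Matrix (Fin n) (Fin p) ℝ)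
    (hrow : ∀ i, lpNorm r (X i) ≤ Xb)
    (hcolne : ∀ j, (fun i => X i j) ≠ 0)
    (ht : Fin p → Fin n → ℝ)
    (hht : ∀ j, ht j = fun i =>
      ((n : ℝ) ^ (1 / r) * Xb * Bb / lpNorm r (fun i' => X i' j)) * X i j)
    (c : Fin V → Fin p → ℝ) (δ : Fin V → ℝ) (hδ : ∀ ν, 0 < δ ν)
    (ct : Fin V → Fin p → ℝ)
    (hct : ∀ ν j, ct ν j =
      c ν j * ((n : ℝ) ^ (1 / r) * Xb * Bb) / lpNorm r (fun i => X i j))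
    (hctpos : ∀ ν, 0 < ∑ j, |ct ν j|)
    (Xt : Matrix (Fin n) (Fin p) ℝ) (hXt : ∀ i j, Xt i j = ht j i)
    (lam : ℝ) (hlam : 0 < lam)
    (hquad : ∀ v : Fin p → ℝ, lam * ∑ j, (v j) ^ 2 ≤ ∑ i, (Xt.mulVec v i) ^ 2)
    (ε : ℝ) (hε0 : 0 < ε) (hε : ε < Xb * Bb)
    (K : ℕ)
    (hK : K = max ⌈Xb ^ 2 * Bb ^ 2 / ε ^ 2⌉₊
        ⌈(n : ℝ) * Xb ^ 2 * Bb ^ 2 /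
          (lam * (⨅ ν : Fin V, δ ν / ∑ j, |ct ν j|) ^ 2)⌉₊) :
    ∀ β : Fin p → ℝ, lpNorm q β ≤ Bb → (∀ ν, ∑ j, c ν j * β j + δ ν ≤ 1) →
      ∃ k : Fin p → ℤ, (∑ j, |k j|) ≤ (K : ℤ) ∧
        (∀ ν, ∑ j, ct ν j * (k j : ℝ) ≤ (K : ℝ)) ∧
        Real.sqrt (∑ i, (X.mulVec β i - ∑ j, ((k j : ℝ) / K) * ht j i) ^ 2) ≤
          Real.sqrt n * ε := by
  intro β hβq hβc
  have hr0 : (0:ℝ) < r := by linarith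
  have hr1 : (1:ℝ) < r := by linarith
  have hnpos : (0:ℝ) < (n:ℝ) := by exact_mod_cast hn
  set N : ℝ := (n : ℝ) ^ (1 / r) * Xb * Bb with hN
  have hNpos : 0 < N := by
    have := Real.rpow_pos_of_pos hnpos (1 / r)
    positivity
  set ρ : Fin p → ℝ := fun j => lpNorm r (fun i => X i j) with hρ
  have hρpos : ∀ j, 0 < ρ j := by
    intro j
    obtain ⟨i, hi⟩ : ∃ i, X i j ≠ 0 := by
      by_contra h
      push_neg at h
      exact hcolne j (funext h)
    have hterm : 0 < |X i j| ^ r := Real.rpow_pos_of_pos (abs_pos.2 hi) r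
    have hsum : 0 < ∑ i', |X i' j| ^ r :=
      lt_of_lt_of_le hterm (Finset.single_le_sum (f := fun i' => |X i' j| ^ r)
        (fun i' _ => Real.rpow_nonneg (abs_nonneg _) r) (mem_univ i))
    exact Real.rpow_pos_of_pos hsum (1 / r)
  have hsumnn : ∀ j, (0:ℝ) ≤ ∑ i, |X i j| ^ r :=
    fun j => Finset.sum_nonneg fun i _ => Real.rpow_nonneg (abs_nonneg _) r
  have hρpow : ∀ j, ρ j ^ r = ∑ i, |X i j| ^ r := by
    intro j
    show ((∑ i, |X i j| ^ r) ^ (1/r)) ^ r = _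
    rw [← Real.rpow_mul (hsumnn j), one_div, inv_mul_cancel₀ hr0.ne', Real.rpow_one]
  -- row power bound
  have hrowpow : ∀ i, ∑ j, |X i j| ^ r ≤ Xb ^ r := by
    intro i
    have h := hrow i
    have h2 := Real.rpow_le_rpow (Real.rpow_nonneg
      (Finset.sum_nonneg fun j _ => Real.rpow_nonneg (abs_nonneg _) r) _) h hr0.le
    rwa [← Real.rpow_mul (Finset.sum_nonneg fun j _ => Real.rpow_nonneg (abs_nonneg _) r),
      one_div, inv_mul_cancel₀ hr0.ne', Real.rpow_one] at h2
  set bt : Fin p → ℝ := fun j => β j * ρ j / N with hbt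
  -- Fact 1 : ∑ |bt j| ≤ 1
  have fact1 : ∑ j, |bt j| ≤ 1 := by
    have habs : ∀ j, |bt j| = |β j| * ρ j / N := by
      intro j
      rw [hbt, abs_div, abs_mul, abs_of_pos (hρpos j), abs_of_pos hNpos]
    rw [Finset.sum_congr rfl fun j _ => habs j]
    have hqr : q.HolderConjugate r := by
      have : r.HolderConjugate (Real.conjExponent r) := Real.HolderConjugate.conjExponent hr1
      have hcq : Real.conjExponent r = q := by rw [hq]; rfl
      rw [hcq] at this
      exact this.symm
    have hold : ∑ j, |β j| * ρ j ≤
        (∑ j, |(|β j|)| ^ q) ^ (1/q) * (∑ j, |ρ j| ^ r) ^ (1/r) :=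
      Real.inner_le_Lp_mul_Lq Finset.univ (fun j => |β j|) ρ hqr
    simp only [abs_abs] at hold
    have hρabs : ∀ j, |ρ j| ^ r = ρ j ^ r := fun j => by rw [abs_of_pos (hρpos j)]
    rw [Finset.sum_congr rfl fun j _ => hρabs j] at hold
    have hρsum : ∑ j, ρ j ^ r ≤ (n:ℝ) * Xb ^ r := by
      calc ∑ j, ρ j ^ r = ∑ j, ∑ i, |X i j| ^ r := Finset.sum_congr rfl fun j _ => hρpow j
        _ = ∑ i, ∑ j, |X i j| ^ r := Finset.sum_comm
        _ ≤ ∑ i : Fin n, Xb ^ r := Finset.sum_le_sum fun i _ => hrowpow i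
        _ = (n:ℝ) * Xb ^ r := by rw [Finset.sum_const]; simp [mul_comm]
    have h2 : (∑ j, ρ j ^ r) ^ (1/r) ≤ ((n:ℝ) * Xb ^ r) ^ (1/r) :=
      Real.rpow_le_rpow (Finset.sum_nonneg fun j _ =>
        Real.rpow_nonneg (hρpos j).le r) hρsum (by positivity)
    have h3 : ((n:ℝ) * Xb ^ r) ^ (1/r) = (n:ℝ) ^ (1/r) * Xb := by
      rw [Real.mul_rpow hnpos.le (Real.rpow_nonneg hXb.le r), ← Real.rpow_mul hXb.le,
        mul_one_div, div_self hr0.ne', Real.rpow_one]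
    have h4 : ∑ j, |β j| * ρ j ≤ Bb * ((n:ℝ) ^ (1/r) * Xb) := by
      calc ∑ j, |β j| * ρ j ≤ (∑ j, |β j| ^ q) ^ (1/q) * (∑ j, ρ j ^ r) ^ (1/r) := hold
        _ ≤ Bb * ((n:ℝ) ^ (1/r) * Xb) := by
            rw [← h3]
            refine mul_le_mul hβq (h2.trans_eq rfl) ?_ hBb.le
            exact Real.rpow_nonneg (Finset.sum_nonneg fun j _ =>
              Real.rpow_nonneg (hρpos j).le r) _
    rw [← Finset.sum_div]
    rw [div_le_one hNpos, hN]
    calc ∑ j, |β j| * ρ j ≤ Bb * ((n:ℝ) ^ (1/r) * Xb) := h4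
      _ = (n:ℝ) ^ (1/r) * Xb * Bb := by ring
  -- column ℓ2 bound
  have hcol2 : ∀ j, ∑ i, (X i j) ^ 2 ≤ (n:ℝ) * ((1:ℝ)/n) ^ ((2:ℝ)/r) * ρ j ^ 2 := by
    intro j
    have hp2 : (1:ℝ) ≤ r / 2 := by linarith
    have hmean := Real.arith_mean_le_rpow_mean Finset.univ (fun _ => (1:ℝ)/n)
      (fun i => (X i j) ^ 2) (fun i _ => by positivity)
      (by rw [Finset.sum_const]; simp; field_simp) (fun i _ => sq_nonneg _) hp2
    have hzp : ∀ i : Fin n, ((X i j) ^ 2 : ℝ) ^ (r/2) = |X i j| ^ r := by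
      intro i
      rw [← sq_abs, ← Real.rpow_natCast |X i j| 2, ← Real.rpow_mul (abs_nonneg _)]
      norm_num
      congr 1
      ring
    simp only [hzp] at hmean
    have h1p : (1:ℝ) / (r/2) = 2/r := by rw [one_div_div]
    rw [h1p] at hmean
    rw [← Finset.mul_sum, ← Finset.mul_sum] at hmean
    have hrhs : ((1:ℝ)/n * ∑ i, |X i j| ^ r) ^ ((2:ℝ)/r)
        = ((1:ℝ)/n) ^ ((2:ℝ)/r) * ρ j ^ 2 := by
      rw [Real.mul_rpow (by positivity) (hsumnn j)]
      congr 1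
      have : (∑ i, |X i j| ^ r) ^ ((2:ℝ)/r)
          = ((∑ i, |X i j| ^ r) ^ ((1:ℝ)/r)) ^ ((2:ℕ):ℝ) := by
        rw [← Real.rpow_mul (hsumnn j)]
        norm_num
        congr 1
        ring
      rw [this, Real.rpow_natCast]
      rfl
    rw [hrhs] at hmean
    calc ∑ i, (X i j) ^ 2 = (n:ℝ) * ((1:ℝ)/n * ∑ i, (X i j) ^ 2) := by field_simp
      _ ≤ (n:ℝ) * (((1:ℝ)/n) ^ ((2:ℝ)/r) * ρ j ^ 2) := by
          exact mul_le_mul_of_nonneg_left hmean hnpos.le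
      _ = (n:ℝ) * ((1:ℝ)/n) ^ ((2:ℝ)/r) * ρ j ^ 2 := by ring
  have hNC : N ^ 2 * ((n:ℝ) * ((1:ℝ)/n) ^ ((2:ℝ)/r)) = (n:ℝ) * Xb ^ 2 * Bb ^ 2 := by
    have h1 : ((n:ℝ) ^ ((1:ℝ)/r)) ^ 2 = (n:ℝ) ^ ((2:ℝ)/r) := by
      rw [← Real.rpow_natCast ((n:ℝ) ^ ((1:ℝ)/r)) 2, ← Real.rpow_mul hnpos.le]
      norm_num
      congr 1
      ring
    have h2 : ((1:ℝ)/n) ^ ((2:ℝ)/r) = ((n:ℝ) ^ ((2:ℝ)/r))⁻¹ := by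
      rw [one_div, Real.inv_rpow hnpos.le]
    have h3 : ((n:ℝ) ^ ((2:ℝ)/r)) ≠ 0 := (Real.rpow_pos_of_pos hnpos _).ne'
    rw [hN, h2]
    field_simp [mul_pow, h1]
    ring
    rw [← Real.rpow_natCast, ← Real.rpow_mul hnpos.le]; norm_num
  -- the ht formula
  have hhtf : ∀ j i, ht j i = (N / ρ j) * X i j := by
    intro j i
    rw [hht j]
  -- atoms
  set s : Fin p → ℝ := fun j => if bt j < 0 then -1 else 1 with hs
  have hs2 : ∀ j, s j ^ 2 = 1 := by
    intro j
    rcases lt_or_ge (bt j) 0 with h | h <;> simp [hs, h, if_pos, if_neg]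
  have hsbt : ∀ j, s j * |bt j| = bt j := by
    intro j
    rcases lt_or_ge (bt j) 0 with h | h
    · simp only [hs, if_pos h, abs_of_neg h]
      ring
    · simp only [hs, if_neg (not_lt.2 h), abs_of_nonneg h]
      ring
  set a : Fin p → EuclideanSpace ℝ (Fin n) := fun j => WithLp.toLp 2 (fun i => s j * ht j i) with ha
  have haapp : ∀ j i, a j i = s j * ht j i := fun j i => rfl
  set M : ℝ := (n:ℝ) * Xb ^ 2 * Bb ^ 2 with hM
  have hM0 : 0 ≤ M := by positivity
  have hMa : ∀ j, ‖a j‖ ^ 2 ≤ M := by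
    intro j
    rw [euc_norm_sq]
    have : ∀ i, (a j i) ^ 2 = (N / ρ j) ^ 2 * (X i j) ^ 2 := by
      intro i
      rw [haapp, hhtf, mul_pow, mul_pow, hs2, one_mul]
    rw [Finset.sum_congr rfl fun i _ => this i, ← Finset.mul_sum]
    calc (N / ρ j) ^ 2 * ∑ i, (X i j) ^ 2
        ≤ (N / ρ j) ^ 2 * ((n:ℝ) * ((1:ℝ)/n) ^ ((2:ℝ)/r) * ρ j ^ 2) :=
          mul_le_mul_of_nonneg_left (hcol2 j) (sq_nonneg _)
      _ = N ^ 2 * ((n:ℝ) * ((1:ℝ)/n) ^ ((2:ℝ)/r)) := by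
          field_simp [(hρpos j).ne']
      _ = M := hNC
  -- Maurey
  obtain ⟨m, hmK, hmb⟩ := maurey a (fun j => |bt j|) M (fun j => abs_nonneg _)
    fact1 hMa hM0 K
  set k : Fin p → ℤ := fun j => (if bt j < 0 then -1 else 1) * m j with hk'
  have hkabs : ∀ j, |k j| = (m j : ℤ) := by
    intro j
    rw [hk', abs_mul]
    split <;> simp
  have hkr : ∀ j, (k j : ℝ) = s j * m j := by
    intro j
    rw [hk', hs]
    push_cast
    split <;> simp
  have hKpos : 0 < K := by
    rw [hK]
    refine lt_of_lt_of_le ?_ (le_max_left _ _)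
    rw [Nat.ceil_pos]
    positivity
  have hKR : (0:ℝ) < K := by exact_mod_cast hKpos
  have hK1 : Xb ^ 2 * Bb ^ 2 / ε ^ 2 ≤ (K:ℝ) := by
    refine le_trans (Nat.le_ceil _) ?_
    exact_mod_cast Nat.cast_le.2 (hK ▸ le_max_left _ _)
  -- key vector identity
  have hXβ : ∀ i, X.mulVec β i = ∑ j, bt j * ht j i := by
    intro i
    rw [Matrix.mulVec, dotProduct]
    refine Finset.sum_congr rfl fun j _ => ?_
    rw [hhtf, hbt]
    field_simp [(hρpos j).ne', hNpos.ne']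
  set f : EuclideanSpace ℝ (Fin n) := ∑ j, |bt j| • a j with hf
  have hfi : ∀ i, f i = X.mulVec β i := by
    intro i
    rw [hf, euc_sum_apply, hXβ]
    refine Finset.sum_congr rfl fun j _ => ?_
    show |bt j| • (a j i) = bt j * ht j i
    rw [smul_eq_mul, haapp, ← mul_assoc, mul_comm (|bt j|) (s j), hsbt]
  set u : EuclideanSpace ℝ (Fin n) := ∑ j, ((m j : ℝ)) • a j with hu
  have hui : ∀ i, u i = ∑ j, (m j : ℝ) * (s j * ht j i) := by
    intro i
    rw [hu, euc_sum_apply]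
    exact Finset.sum_congr rfl fun j _ => rfl
  set vv : EuclideanSpace ℝ (Fin n) := f - (K:ℝ)⁻¹ • u with hvv
  have hvvi : ∀ i, vv i = X.mulVec β i - ∑ j, ((k j : ℝ) / K) * ht j i := by
    intro i
    have : vv i = f i - (K:ℝ)⁻¹ * u i := rfl
    rw [this, hfi, hui, Finset.mul_sum]
    congr 1
    refine Finset.sum_congr rfl fun j _ => ?_
    rw [hkr]
    field_simp
  have hvbound : ‖vv‖ ^ 2 ≤ M / K := by
    have hid : vv = (-(K:ℝ)⁻¹) • (u - (K:ℝ) • f) := by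
      rw [hvv]
      match_scalars <;> field_simp
    rw [hid, norm_smul, mul_pow, Real.norm_eq_abs, abs_neg, abs_inv,
      abs_of_pos hKR]
    calc ((K:ℝ)⁻¹) ^ 2 * ‖u - (K:ℝ) • f‖ ^ 2 ≤ ((K:ℝ)⁻¹) ^ 2 * ((K:ℝ) * M) := by
          exact mul_le_mul_of_nonneg_left hmb (by positivity)
      _ = M / K := by field_simp
  have hSvv : ∑ i, (X.mulVec β i - ∑ j, ((k j : ℝ) / K) * ht j i) ^ 2 = ‖vv‖ ^ 2 := by
    rw [euc_norm_sq]
    exact Finset.sum_congr rfl fun i _ => by rw [hvvi]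
  -- the ℓ2 estimate
  have hl2 : Real.sqrt (∑ i, (X.mulVec β i - ∑ j, ((k j : ℝ) / K) * ht j i) ^ 2) ≤
      Real.sqrt n * ε := by
    have hMK : M / K ≤ (n:ℝ) * ε ^ 2 := by
      rw [hM, div_le_iff₀ hKR]
      have h1 : Xb ^ 2 * Bb ^ 2 ≤ ε ^ 2 * K := by
        rw [div_le_iff₀ (by positivity : (0:ℝ) < ε ^ 2)] at hK1
        linarith
      calc (n:ℝ) * Xb ^ 2 * Bb ^ 2 = (n:ℝ) * (Xb ^ 2 * Bb ^ 2) := by ring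
        _ ≤ (n:ℝ) * (ε ^ 2 * K) := mul_le_mul_of_nonneg_left h1 hnpos.le
        _ = (n:ℝ) * ε ^ 2 * K := by ring
    rw [hSvv]
    calc Real.sqrt (‖vv‖ ^ 2) ≤ Real.sqrt ((n:ℝ) * ε ^ 2) :=
          Real.sqrt_le_sqrt (hvbound.trans hMK)
      _ = Real.sqrt n * ε := by
          rw [Real.sqrt_mul hnpos.le, Real.sqrt_sq hε0.le]
  -- the infimum d
  haveI : Nonempty (Fin V) := ⟨⟨0, hV⟩⟩
  set d : ℝ := ⨅ ν : Fin V, δ ν / ∑ j, |ct ν j| with hd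
  have hdle : ∀ ν, d ≤ δ ν / ∑ j, |ct ν j| :=
    fun ν => ciInf_le (Set.finite_range _).bddBelow ν
  have hd0 : 0 < d := by
    obtain ⟨ν0, hν0⟩ := Finite.exists_min (fun ν : Fin V => δ ν / ∑ j, |ct ν j|)
    have h1 : 0 < δ ν0 / ∑ j, |ct ν0 j| := div_pos (hδ ν0) (hctpos ν0)
    exact lt_of_lt_of_le h1 (le_ciInf hν0)
  have hK2 : M / (lam * d ^ 2) ≤ (K:ℝ) := by
    refine le_trans (Nat.le_ceil _) ?_
    exact_mod_cast Nat.cast_le.2 (hK ▸ le_max_right _ _)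
  -- the g vector
  set g : Fin p → ℝ := fun j => bt j - (k j : ℝ) / K with hg
  have hXtg : ∀ i, Xt.mulVec g i = X.mulVec β i - ∑ j, ((k j : ℝ) / K) * ht j i := by
    intro i
    rw [Matrix.mulVec, dotProduct, hXβ, ← Finset.sum_sub_distrib]
    refine Finset.sum_congr rfl fun j _ => ?_
    rw [hXt, hg]
    ring
  have hgsq : ∑ j, g j ^ 2 ≤ d ^ 2 := by
    have h1 : lam * ∑ j, g j ^ 2 ≤ M / K := by
      calc lam * ∑ j, g j ^ 2 ≤ ∑ i, (Xt.mulVec g i) ^ 2 := hquad g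
        _ = ‖vv‖ ^ 2 := by
            rw [euc_norm_sq]
            exact Finset.sum_congr rfl fun i _ => by rw [hXtg, hvvi]
        _ ≤ M / K := hvbound
    have h2 : M / K ≤ lam * d ^ 2 := by
      rw [div_le_iff₀ hKR]
      rw [div_le_iff₀ (by positivity : (0:ℝ) < lam * d ^ 2)] at hK2
      linarith
    have h3 := h1.trans h2
    exact le_of_mul_le_mul_left h3 hlam
  have habsg : ∀ j, |g j| ≤ d := by
    intro j
    have h1 : g j ^ 2 ≤ d ^ 2 :=
      le_trans (Finset.single_le_sum (f := fun j => g j ^ 2)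
        (fun j _ => sq_nonneg _) (mem_univ j)) hgsq
    calc |g j| = Real.sqrt (g j ^ 2) := (Real.sqrt_sq_eq_abs _).symm
      _ ≤ Real.sqrt (d ^ 2) := Real.sqrt_le_sqrt h1
      _ = d := Real.sqrt_sq hd0.le
  -- constraints
  have hcons : ∀ ν, ∑ j, ct ν j * (k j : ℝ) ≤ (K:ℝ) := by
    intro ν
    have hctbt : ∀ j, ct ν j * bt j = c ν j * β j := by
      intro j
      rw [hct, hbt]
      field_simp [(hρpos j).ne', hNpos.ne']
      show c ν j * β j * ρ j * (ρ j)⁻¹ = c ν j * β j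
      rw [mul_inv_cancel_right₀ (hρpos j).ne']
    have hkg : ∀ j, (k j : ℝ) = K * (bt j - g j) := by
      intro j
      rw [hg]
      field_simp
      ring
    have hsum : ∑ j, ct ν j * (k j : ℝ) = (K:ℝ) * (∑ j, c ν j * β j - ∑ j, ct ν j * g j) := by
      have : ∀ j, ct ν j * (k j : ℝ) = (K:ℝ) * (ct ν j * bt j - ct ν j * g j) := by
        intro j
        rw [hkg j]
        ring
      rw [Finset.sum_congr rfl fun j _ => this j, ← Finset.mul_sum,
        Finset.sum_sub_distrib, Finset.sum_congr rfl fun j _ => hctbt j]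
    have habs2 : |∑ j, ct ν j * g j| ≤ δ ν := by
      calc |∑ j, ct ν j * g j| ≤ ∑ j, |ct ν j * g j| := Finset.abs_sum_le_sum_abs _ _
        _ = ∑ j, |ct ν j| * |g j| := Finset.sum_congr rfl fun j _ => abs_mul _ _
        _ ≤ ∑ j, |ct ν j| * d := Finset.sum_le_sum fun j _ =>
            mul_le_mul_of_nonneg_left (habsg j) (abs_nonneg _)
        _ = d * ∑ j, |ct ν j| := by rw [← Finset.sum_mul]; ring
        _ ≤ δ ν := (le_div_iff₀ (hctpos ν)).1 (hdle ν)
    have hfinal : ∑ j, c ν j * β j - ∑ j, ct ν j * g j ≤ 1 := by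
      have h1 : ∑ j, c ν j * β j ≤ 1 - δ ν := by linarith [hβc ν]
      have h2 := abs_le.1 habs2
      linarith
    calc ∑ j, ct ν j * (k j : ℝ) = (K:ℝ) * (∑ j, c ν j * β j - ∑ j, ct ν j * g j) := hsum
      _ ≤ (K:ℝ) * 1 := mul_le_mul_of_nonneg_left hfinal hKR.le
      _ = (K:ℝ) := mul_one _
  exact ⟨k, by
    calc ∑ j, |k j| = ∑ j, (m j : ℤ) := Finset.sum_congr rfl fun j _ => hkabs j
      _ ≤ (K : ℤ) := by exact_mod_cast hmK, hcons, hl2⟩
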